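/- There is an absolute constant C such that for every complex Banach space E and every function f : Ā → E which is continuous on Ā and analytic on Ω, the series g(z) = Σ_{k≥0} f̂(k) z^k converges for all |z| < e, the function g extends to a continuous function on the closed disk {z : |z| ≤ e}, and sup_{|z|≤e} ‖g(z)‖_E ≤ C · sup_{z∈Ā} ‖f(z)‖_E. -/

import Mathlib

open MeasureTheory Filter Topology

/-- The closed annulus `Ā = {z : 1 ≤ |z| ≤ e}`. -/
noncomputable def closedAnnulus : Set ℂ :=
  {z : ℂ | 1 ≤ ‖z‖ ∧ ‖z‖ ≤ Real.exp 1}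

/-- The open annulus `Ω = {z : 1 < |z| < e}`. -/
noncomputable def openAnnulus : Set ℂ :=
  {z : ℂ | 1 < ‖z‖ ∧ ‖z‖ < Real.exp 1}

/-- The `k`-th Fourier–Laurent coefficient `f̂(k) = ∫₀^{2π} f(e^{it}) e^{-ikt} dt/2π`
of a function on the annulus. -/
noncomputable def fourierLaurent {E : Type*} [NormedAddCommGroup E] [NormedSpace ℂ E]
    (f : ℂ → E) (k : ℤ) : E :=
  (((2 * Real.pi)⁻¹ : ℝ) : ℂ) •
    ∫ t in (0:ℝ)..(2 * Real.pi),
      Complex.exp (-(Complex.I * k * t)) • f (Complex.exp (Complex.I * t))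

universe u

open Metric Complex

set_option maxHeartbeats 1000000

noncomputable def cauchyCoeff {E : Type u} [NormedAddCommGroup E] [NormedSpace ℂ E]
    (f : ℂ → E) (r : ℝ) (n : ℕ) : E :=
  (2 * Real.pi * Complex.I : ℂ)⁻¹ • ∮ z in C(0, r), z⁻¹ ^ n • z⁻¹ • f z

section Aux
variable {E : Type u} [NormedAddCommGroup E] [NormedSpace ℂ E] [CompleteSpace E]
variable {f : ℂ → E} {M : ℝ}

lemma sphere_subset_closedAnnulus {r : ℝ} (h1 : 1 ≤ r) (h2 : r ≤ Real.exp 1) :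
    Metric.sphere (0:ℂ) r ⊆ closedAnnulus := by
  intro z hz
  rw [mem_sphere_zero_iff_norm] at hz
  exact ⟨hz ▸ h1, hz ▸ h2⟩

lemma circleIntegrable_of_continuousOn (hc : ContinuousOn f closedAnnulus)
    {r : ℝ} (h1 : 1 ≤ r) (h2 : r ≤ Real.exp 1) : CircleIntegrable f 0 r :=
  (hc.mono (sphere_subset_closedAnnulus h1 h2)).circleIntegrable (by linarith)

lemma cauchyCoeff_radius_eq (hc : ContinuousOn f closedAnnulus)
    (hd : DifferentiableOn ℂ f openAnnulus)
    {r : ℝ} (h1 : 1 ≤ r) (h2 : r ≤ Real.exp 1) (n : ℕ) :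
    cauchyCoeff f r n = cauchyCoeff f 1 n := by
  unfold cauchyCoeff
  congr 1
  apply Complex.circleIntegral_eq_of_differentiable_on_annulus_off_countable
    (zero_lt_one) h1 (Set.countable_empty)
  · intro w hw
    have hw1 : 1 ≤ ‖w‖ := by
      simpa using (by simpa using hw.2 : ¬ ‖w‖ < 1)
    have hw2 : ‖w‖ ≤ Real.exp 1 := by
      have := hw.1
      rw [mem_closedBall_zero_iff] at this
      exact le_trans (by simpa using this) h2
    have hw0 : w ≠ 0 := by
      intro h; rw [h] at hw1; simp at hw1; linarith
    exact (((continuousOn_id.inv₀ (fun z hz => by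
        intro h; subst h
        have : (1:ℝ) ≤ ‖(0:ℂ)‖ := by
          simpa using (by simpa using hz.2 : ¬ ‖(0:ℂ)‖ < 1)
        simp at this; linarith)).pow n).smul
      ((continuousOn_id.inv₀ (fun z hz => by
        intro h; subst h
        have : (1:ℝ) ≤ ‖(0:ℂ)‖ := by
          simpa using (by simpa using hz.2 : ¬ ‖(0:ℂ)‖ < 1)
        simp at this; linarith)).smul
      (hc.mono (fun z hz => by
        have hz1 : 1 ≤ ‖z‖ := by
          simpa using (by simpa using hz.2 : ¬ ‖z‖ < 1)
        have hz2 : ‖z‖ ≤ Real.exp 1 := by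
          have := hz.1; rw [mem_closedBall_zero_iff] at this
          exact le_trans (by simpa using this) h2
        exact ⟨hz1, hz2⟩)))) w hw
  · intro w hw
    have hw1 : 1 < ‖w‖ := by
      have := hw.1.2
      rw [Metric.mem_closedBall, not_le] at this
      simpa [Complex.dist_eq] using this
    have hw2 : ‖w‖ < Real.exp 1 := by
      have := hw.1.1
      rw [mem_ball_zero_iff] at this
      exact lt_of_lt_of_le (by simpa using this) h2
    have hw0 : w ≠ 0 := by
      intro h; rw [h] at hw1; simp at hw1; linarith
    have hfd : DifferentiableAt ℂ f w :=
      hd.differentiableAt (IsOpen.mem_nhds (by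
        have : openAnnulus = (fun z : ℂ => ‖z‖) ⁻¹' (Set.Ioo 1 (Real.exp 1)) := rfl
        rw [this]
        exact IsOpen.preimage continuous_norm isOpen_Ioo) ⟨hw1, hw2⟩)
    exact (((differentiableAt_id.inv hw0).pow n).smul ((differentiableAt_id.inv hw0).smul hfd))

end Aux

section Aux2
variable {E : Type u} [NormedAddCommGroup E] [NormedSpace ℂ E] [CompleteSpace E]
variable {f : ℂ → E} {M : ℝ}

set_option linter.unusedSectionVars false

lemma cauchyCoeff_one_eq (f : ℂ → E) (n : ℕ) : cauchyCoeff f 1 n = fourierLaurent f (n : ℤ) := by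
  unfold cauchyCoeff fourierLaurent circleIntegral
  push_cast
  rw [intervalIntegral.integral_congr
    (g := fun θ : ℝ => Complex.I • (Complex.exp (-(Complex.I * n * θ)) •
      f (Complex.exp (Complex.I * θ))))]
  · rw [intervalIntegral.integral_smul, smul_smul]
    congr 1
    have h2π : (2 * (Real.pi:ℝ)) ≠ 0 := by positivity
    have hA : (2 * (Real.pi:ℂ) * Complex.I) ≠ 0 := by
      refine mul_ne_zero (mul_ne_zero two_ne_zero ?_) Complex.I_ne_zero
      exact_mod_cast Real.pi_ne_zero
    have hB : (2 * (Real.pi:ℂ)) ≠ 0 := by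
      exact mul_ne_zero two_ne_zero (by exact_mod_cast Real.pi_ne_zero)
    field_simp
  · intro θ _
    simp only []
    have h1 : circleMap 0 1 θ = Complex.exp (Complex.I * θ) := by
      simp [circleMap, mul_comm]
    have hne : Complex.exp (Complex.I * θ) ≠ 0 := Complex.exp_ne_zero _
    rw [deriv_circleMap, h1, smul_smul, smul_smul, smul_smul]
    congr 1
    have h2 : Complex.exp (-(Complex.I * (n:ℂ) * θ)) = (Complex.exp (Complex.I * θ))⁻¹ ^ n := by
      rw [show -(Complex.I * (n:ℂ) * θ) = (n:ℂ) * (-(Complex.I * (θ:ℂ))) by ring,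
        Complex.exp_nat_mul, Complex.exp_neg, inv_pow]
    rw [h2]
    field_simp

lemma norm_cauchyCoeff_le {r : ℝ} (hr : 0 < r)
    (hM : ∀ z ∈ Metric.sphere (0:ℂ) r, ‖f z‖ ≤ M) (n : ℕ) :
    ‖cauchyCoeff f r n‖ ≤ M / r ^ n := by
  unfold cauchyCoeff
  rw [norm_smul]
  have hnorm : ‖(2 * (Real.pi:ℂ) * Complex.I)⁻¹‖ = (2 * Real.pi)⁻¹ := by
    simp [map_inv₀, map_mul, Complex.norm_I,
      abs_of_pos Real.pi_pos]
  have hbound : ∀ z ∈ Metric.sphere (0:ℂ) r, ‖z⁻¹ ^ n • z⁻¹ • f z‖ ≤ r⁻¹ ^ n * r⁻¹ * M := by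
    intro z hz
    rw [mem_sphere_zero_iff_norm] at hz
    rw [norm_smul, norm_smul, norm_pow, norm_inv, hz, mul_assoc]
    gcongr
    exact hM z (by simp [hz, mem_sphere_zero_iff_norm])
  have := circleIntegral.norm_integral_le_of_norm_le_const (f := fun z => z⁻¹ ^ n • z⁻¹ • f z)
    (c := 0) (R := r) (C := r⁻¹ ^ n * r⁻¹ * M) hr.le (by
      intro z hz
      exact hbound z (by simpa [abs_of_pos hr] using hz))
  rw [hnorm]
  calc (2 * Real.pi)⁻¹ * ‖∮ z in C(0, r), z⁻¹ ^ n • z⁻¹ • f z‖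
      ≤ (2 * Real.pi)⁻¹ * (2 * Real.pi * r * (r⁻¹ ^ n * r⁻¹ * M)) := by
        exact mul_le_mul_of_nonneg_left (by simpa using this) (by positivity)
    _ = M / r ^ n := by
        field_simp [Real.pi_ne_zero, hr.ne']
        rw [one_div, inv_pow, mul_comm, ← mul_assoc, mul_inv_cancel₀ (pow_ne_zero _ hr.ne'), one_mul]

end Aux2

section Aux3
variable {E : Type u} [NormedAddCommGroup E] [NormedSpace ℂ E] [CompleteSpace E]
variable {f : ℂ → E} {M : ℝ}

set_option linter.unusedSectionVars false

lemma hasSum_cauchyCoeff {r : ℝ} (hf : CircleIntegrable f 0 r) {z : ℂ}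
    (hz : ‖z‖ < r) :
    HasSum (fun n : ℕ => z ^ n • cauchyCoeff f r n)
      ((2 * Real.pi * Complex.I : ℂ)⁻¹ • ∮ w in C(0, r), (w - z)⁻¹ • f w) := by
  have h := hasSum_cauchyPowerSeries_integral hf hz
  rw [zero_add] at h
  convert h using 1
  funext n
  simp [cauchyPowerSeries, ContinuousMultilinearMap.mkPiRing_apply, Fin.prod_const,
    sub_zero, cauchyCoeff]

lemma cauchy_formula_annulus (hc : ContinuousOn f closedAnnulus)
    (hd : DifferentiableOn ℂ f openAnnulus) {r : ℝ} (hr : r ≤ Real.exp 1) {z : ℂ}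
    (hz1 : 1 < ‖z‖) (hzr : ‖z‖ < r) :
    (2 * Real.pi * Complex.I : ℂ)⁻¹ • (∮ w in C(0, r), (w - z)⁻¹ • f w) =
      f z + (2 * Real.pi * Complex.I : ℂ)⁻¹ • ∮ w in C(0, 1), (w - z)⁻¹ • f w := by
  have hopen : IsOpen openAnnulus :=
    IsOpen.preimage continuous_norm isOpen_Ioo
  have hzΩ : z ∈ openAnnulus := ⟨hz1, lt_of_lt_of_le hzr hr⟩
  have h1r : (1:ℝ) < r := lt_trans hz1 hzr
  have hfz : AnalyticAt ℂ f z := hd.analyticAt (hopen.mem_nhds hzΩ)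
  obtain ⟨p, hp⟩ := hfz
  have hdsl : HasFPowerSeriesAt (dslope f z) p.fslope z :=
    hp.has_fpower_series_dslope_fslope
  -- continuity of dslope on the closed annulus piece
  have hsub : Metric.closedBall (0:ℂ) r \ Metric.ball 0 1 ⊆ closedAnnulus := by
    intro w hw
    constructor
    · simpa using (by simpa using hw.2 : ¬ ‖w‖ < 1)
    · have := hw.1; rw [mem_closedBall_zero_iff] at this
      exact le_trans (by simpa using this) hr
  have hcont : ContinuousOn (dslope f z) (Metric.closedBall (0:ℂ) r \ Metric.ball 0 1) := by
    intro w hw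
    rcases eq_or_ne w z with rfl | hwz
    · exact hdsl.continuousAt.continuousWithinAt
    · rw [continuousWithinAt_dslope_of_ne hwz]
      exact (hc.mono hsub) w hw
  have hdiff : ∀ w ∈ (Metric.ball (0:ℂ) r \ Metric.closedBall 0 1) \ (∅ : Set ℂ),
      DifferentiableAt ℂ (dslope f z) w := by
    intro w hw
    have hw' : w ∈ openAnnulus := by
      constructor
      · have := hw.1.2; rw [Metric.mem_closedBall, not_le] at this
        simpa [Complex.dist_eq] using this
      · have := hw.1.1; rw [mem_ball_zero_iff] at this
        exact lt_of_lt_of_le (by simpa using this) hr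
    rcases eq_or_ne w z with rfl | hwz
    · exact hdsl.differentiableAt
    · rw [differentiableAt_dslope_of_ne hwz]
      exact hd.differentiableAt (hopen.mem_nhds hw')
  have hkey : (∮ w in C(0, r), dslope f z w) = ∮ w in C(0, 1), dslope f z w :=
    Complex.circleIntegral_eq_of_differentiable_on_annulus_off_countable zero_lt_one h1r.le
      Set.countable_empty hcont hdiff
  -- rewrite both sides
  have hint_f_r : CircleIntegrable (fun w => (w - z)⁻¹ • f w) 0 r := by
    apply ContinuousOn.circleIntegrable (by linarith)
    apply ContinuousOn.smul
    · exact ContinuousOn.inv₀ (continuousOn_id.sub continuousOn_const) (fun w hw => by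
        rw [mem_sphere_zero_iff_norm] at hw
        intro h
        rw [sub_eq_zero] at h
        subst h
        exact absurd (by simpa using hw) hzr.ne)
    · exact hc.mono ((sphere_subset_closedAnnulus (by linarith) hr))
  have hint_f_1 : CircleIntegrable (fun w => (w - z)⁻¹ • f w) 0 1 := by
    apply ContinuousOn.circleIntegrable zero_le_one
    apply ContinuousOn.smul
    · exact ContinuousOn.inv₀ (continuousOn_id.sub continuousOn_const) (fun w hw => by
        rw [mem_sphere_zero_iff_norm] at hw
        intro h
        rw [sub_eq_zero] at h
        subst h
        exact absurd (by simpa using hw) hz1.ne')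
    · exact hc.mono ((sphere_subset_closedAnnulus le_rfl (by linarith [Real.exp_one_gt_d9])))
  have hint_c_r : CircleIntegrable (fun w => (w - z)⁻¹ • f z) 0 r := by
    apply ContinuousOn.circleIntegrable (by linarith)
    refine ContinuousOn.smul (ContinuousOn.inv₀
      (continuousOn_id.sub continuousOn_const) ?_) continuousOn_const
    intro w hw
    rw [mem_sphere_zero_iff_norm] at hw
    intro h
    rw [sub_eq_zero] at h
    subst h
    exact absurd (by simpa using hw) hzr.ne
  have hint_c_1 : CircleIntegrable (fun w => (w - z)⁻¹ • f z) 0 1 := by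
    apply ContinuousOn.circleIntegrable zero_le_one
    refine ContinuousOn.smul (ContinuousOn.inv₀
      (continuousOn_id.sub continuousOn_const) ?_) continuousOn_const
    intro w hw
    rw [mem_sphere_zero_iff_norm] at hw
    intro h
    rw [sub_eq_zero] at h
    subst h
    exact absurd (by simpa using hw) hz1.ne'
  have hrw_r : (∮ w in C(0, r), dslope f z w) =
      (∮ w in C(0, r), (w - z)⁻¹ • f w) - (2 * Real.pi * Complex.I : ℂ) • f z := by
    have : (∮ w in C(0, r), dslope f z w) =
        ∮ w in C(0, r), ((w - z)⁻¹ • f w - (w - z)⁻¹ • f z) := by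
      apply circleIntegral.integral_congr (by linarith)
      intro w hw
      have hwz : w ≠ z := by
        rw [mem_sphere_zero_iff_norm] at hw
        intro h; subst h
        exact hzr.ne (by simpa using hw)
      rw [dslope_of_ne _ hwz, slope_def_module, smul_sub]
    rw [this, circleIntegral.integral_sub hint_f_r hint_c_r]
    congr 1
    rw [circleIntegral.integral_smul_const, circleIntegral.integral_sub_inv_of_mem_ball
      (by simpa [Complex.dist_eq] using hzr)]
  have hrw_1 : (∮ w in C(0, 1), dslope f z w) =
      ∮ w in C(0, 1), (w - z)⁻¹ • f w := by
    have h0 : (∮ w in C(0, 1), (w - z)⁻¹) = 0 := by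
      apply Complex.circleIntegral_eq_zero_of_differentiable_on_off_countable zero_le_one
        Set.countable_empty
      · apply ContinuousOn.inv₀ (continuousOn_id.sub continuousOn_const)
        intro w hw
        rw [mem_closedBall_zero_iff] at hw
        intro h; simp only [Pi.sub_apply, id_eq, sub_eq_zero] at h; subst h
        exact absurd (by simpa using hw) (not_le.2 hz1)
      · intro w hw
        have hwz : w ≠ z := by
          intro h; subst h
          have := hw.1; rw [mem_ball_zero_iff] at this
          exact absurd (by simpa using this) (not_lt.2 hz1.le)
        exact (differentiableAt_id.sub_const z).inv (sub_ne_zero.2 hwz)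
    have : (∮ w in C(0, 1), dslope f z w) =
        ∮ w in C(0, 1), ((w - z)⁻¹ • f w - (w - z)⁻¹ • f z) := by
      apply circleIntegral.integral_congr zero_le_one
      intro w hw
      have hwz : w ≠ z := by
        rw [mem_sphere_zero_iff_norm] at hw
        intro h; subst h
        exact hz1.ne' (by simpa using hw)
      rw [dslope_of_ne _ hwz, slope_def_module, smul_sub]
    rw [this, circleIntegral.integral_sub hint_f_1 hint_c_1, circleIntegral.integral_smul_const,
      h0, zero_smul, sub_zero]
  rw [hrw_r, hrw_1] at hkey
  have h2πI : (2 * Real.pi * Complex.I : ℂ) ≠ 0 := by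
    refine mul_ne_zero (mul_ne_zero two_ne_zero ?_) Complex.I_ne_zero
    exact_mod_cast Real.pi_ne_zero
  have := congrArg (fun x => (2 * Real.pi * Complex.I : ℂ)⁻¹ • x) hkey
  simp only [smul_sub, smul_smul, inv_mul_cancel₀ h2πI, one_smul] at this
  rw [sub_eq_iff_eq_add] at this
  rw [this]
  ring_nf
  rw [add_comm]

end Aux3

section Aux4
variable {E : Type u} [NormedAddCommGroup E] [NormedSpace ℂ E] [CompleteSpace E]
variable {f : ℂ → E} {M : ℝ}

set_option linter.unusedSectionVars false

lemma continuousOn_cauchyIntegral {r : ℝ} (hr : 0 < r)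
    (hfc : Continuous (fun θ : ℝ => f (circleMap 0 r θ))) :
    ContinuousOn (fun z : ℂ => (2 * Real.pi * Complex.I : ℂ)⁻¹ •
      ∮ w in C(0, r), (w - z)⁻¹ • f w) {z : ℂ | ‖z‖ ≠ r} := by
  rw [continuousOn_iff_continuous_restrict]
  apply Continuous.const_smul
  have hderiv : Continuous (fun θ : ℝ => deriv (circleMap 0 r) θ) := by
    simp only [deriv_circleMap]
    exact (continuous_circleMap 0 r).mul continuous_const
  show Continuous fun z : {z : ℂ | ‖z‖ ≠ r} => ∫ θ in (0:ℝ)..(2 * Real.pi),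
    deriv (circleMap 0 r) θ • ((circleMap 0 r θ - (z:ℂ))⁻¹ • f (circleMap 0 r θ))
  refine intervalIntegral.continuous_parametric_intervalIntegral_of_continuous' ?_ _ _
  refine Continuous.smul (hderiv.comp continuous_snd) (Continuous.smul ?_ (hfc.comp continuous_snd))
  apply Continuous.inv₀
  · exact ((continuous_circleMap 0 r).comp continuous_snd).sub
      (continuous_subtype_val.comp continuous_fst)
  · rintro ⟨⟨z, hz⟩, θ⟩
    simp only [Function.comp]
    rw [sub_ne_zero]
    intro h
    apply hz
    rw [← h, norm_circleMap_zero, abs_of_pos hr]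

lemma norm_inner_le (hM : ∀ z ∈ closedAnnulus, ‖f z‖ ≤ M) {z : ℂ}
    (hz : 1 < ‖z‖) :
    ‖(2 * Real.pi * Complex.I : ℂ)⁻¹ • ∮ w in C(0, 1), (w - z)⁻¹ • f w‖ ≤
      M / (‖z‖ - 1) := by
  have he1 : (1:ℝ) ≤ Real.exp 1 := by linarith [Real.exp_one_gt_d9]
  rw [norm_smul]
  have hnorm : ‖(2 * (Real.pi:ℂ) * Complex.I)⁻¹‖ = (2 * Real.pi)⁻¹ := by
    simp [map_inv₀, map_mul, Complex.norm_I,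
      abs_of_pos Real.pi_pos]
  have hbound : ∀ w ∈ Metric.sphere (0:ℂ) 1, ‖(w - z)⁻¹ • f w‖ ≤
      (‖z‖ - 1)⁻¹ * M := by
    intro w hw
    rw [mem_sphere_zero_iff_norm] at hw
    rw [norm_smul, norm_inv]
    have hwA : w ∈ closedAnnulus := by
      constructor <;> simp [hw, he1]
    have hlow : ‖z‖ - 1 ≤ ‖w - z‖ := by
      have h2 := norm_sub_norm_le z w
      rw [norm_sub_rev] at h2
      linarith [h2]
    have hpos : (0:ℝ) < ‖z‖ - 1 := by linarith
    have h1 : ‖w - z‖⁻¹ ≤ (‖z‖ - 1)⁻¹ :=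
      inv_anti₀ hpos hlow
    exact mul_le_mul h1 (hM w hwA) (norm_nonneg _) (by positivity)
  have := circleIntegral.norm_integral_le_of_norm_le_const (c := (0:ℂ)) (R := 1)
    (f := fun w => (w - z)⁻¹ • f w) (C := (‖z‖ - 1)⁻¹ * M) zero_le_one (by
      intro w hw
      exact hbound w (by simpa using hw))
  rw [hnorm]
  have hpos : (0:ℝ) < ‖z‖ - 1 := by linarith
  calc (2 * Real.pi)⁻¹ * ‖∮ w in C(0, 1), (w - z)⁻¹ • f w‖
      ≤ (2 * Real.pi)⁻¹ * (2 * Real.pi * 1 * ((‖z‖ - 1)⁻¹ * M)) :=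
        mul_le_mul_of_nonneg_left (by simpa using this) (by positivity)
    _ = M / (‖z‖ - 1) := by
        field_simp [Real.pi_ne_zero]

end Aux4


theorem stmt9 :
    ∃ C : ℝ, ∀ (E : Type u) [NormedAddCommGroup E] [NormedSpace ℂ E] [CompleteSpace E],
      ∀ (f : ℂ → E) (M : ℝ),
        ContinuousOn f closedAnnulus → DifferentiableOn ℂ f openAnnulus →
        (∀ z ∈ closedAnnulus, ‖f z‖ ≤ M) →
        ∃ g : ℂ → E,
          ContinuousOn g {z : ℂ | ‖z‖ ≤ Real.exp 1} ∧
          (∀ z : ℂ, ‖z‖ < Real.exp 1 →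
            HasSum (fun k : ℕ => z ^ k • fourierLaurent f (k : ℤ)) (g z)) ∧
          ∀ z : ℂ, ‖z‖ ≤ Real.exp 1 → ‖g z‖ ≤ C * M := by
  have hee : (2.7182818283:ℝ) < Real.exp 1 := Real.exp_one_gt_d9
  set e : ℝ := Real.exp 1 with he
  have h1e : (1:ℝ) < e := by linarith
  set r₀ : ℝ := (1 + e) / 2 with hr₀
  set r₁ : ℝ := (r₀ + e) / 2 with hr₁
  have hr₀1 : 1 < r₀ := by rw [hr₀]; linarith
  have hr₀r₁ : r₀ < r₁ := by rw [hr₁]; linarith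
  have hr₁e : r₁ < e := by rw [hr₁]; linarith
  have hr₁1 : 1 < r₁ := lt_trans hr₀1 hr₀r₁
  set q : ℝ := r₀ / r₁ with hq
  have hq0 : 0 ≤ q := by positivity
  have hq1 : q < 1 := by
    rw [hq, div_lt_one (by linarith)]; exact hr₀r₁
  refine ⟨max ((1 - q)⁻¹) (1 + (r₀ - 1)⁻¹), ?_⟩
  intro E _ _ _ f M hc hd hM
  have hM0 : 0 ≤ M := by
    refine le_trans (norm_nonneg (f 2)) (hM 2 ⟨?_, ?_⟩)
    · simp
    · simpa using by linarith
  set a : ℕ → E := fun n => fourierLaurent f (n : ℤ) with ha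
  have hacoeff : ∀ r : ℝ, 1 ≤ r → r ≤ e → ∀ n : ℕ, cauchyCoeff f r n = a n := by
    intro r hr1 hr2 n
    rw [cauchyCoeff_radius_eq hc hd hr1 hr2 n, cauchyCoeff_one_eq]
  have hanorm : ∀ n : ℕ, ‖a n‖ ≤ M / r₁ ^ n := by
    intro n
    rw [← hacoeff r₁ hr₁1.le hr₁e.le n]
    exact norm_cauchyCoeff_le (by linarith)
      (fun w hw => hM w (sphere_subset_closedAnnulus hr₁1.le hr₁e.le hw)) n
  have hsum : ∀ z : ℂ, ∀ r : ℝ, ‖z‖ < r → 1 ≤ r → r ≤ e →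
      HasSum (fun n : ℕ => z ^ n • a n)
        ((2 * Real.pi * Complex.I : ℂ)⁻¹ • ∮ w in C(0, r), (w - z)⁻¹ • f w) := by
    intro z r hzr h1 h2
    have H := hasSum_cauchyCoeff (circleIntegrable_of_continuousOn hc h1 h2) hzr
    have heq : (fun n : ℕ => z ^ n • cauchyCoeff f r n) = fun n : ℕ => z ^ n • a n := by
      funext n; rw [hacoeff r h1 h2]
    rwa [heq] at H
  set h : ℂ → E := fun z => (2 * Real.pi * Complex.I : ℂ)⁻¹ •
    ∮ w in C(0, 1), (w - z)⁻¹ • f w with hh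
  set g : ℂ → E := fun z => if ‖z‖ < e then ∑' n : ℕ, z ^ n • a n
    else f z + h z with hg
  have hgsum : ∀ z : ℂ, ‖z‖ < e → HasSum (fun n : ℕ => z ^ n • a n) (g z) := by
    intro z hz
    set r : ℝ := (max (‖z‖) 1 + e) / 2 with hr
    have hmax1 : (1:ℝ) ≤ max (‖z‖) 1 := le_max_right _ _
    have hmaxe : max (‖z‖) 1 < e := max_lt hz h1e
    have h1r : 1 ≤ r := by rw [hr]; linarith
    have hzr : ‖z‖ < r := by
      rw [hr]; have := le_max_left (‖z‖) 1; linarith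
    have hre : r ≤ e := by rw [hr]; linarith
    have H := hsum z r hzr h1r hre
    have hgz : g z = ∑' n : ℕ, z ^ n • a n := if_pos hz
    rw [hgz]
    exact H.summable.hasSum
  have hgeq : ∀ z : ℂ, 1 < ‖z‖ → ‖z‖ ≤ e → g z = f z + h z := by
    intro z hz1 hz2
    rcases lt_or_eq_of_le hz2 with hlt | heq2
    · set r : ℝ := (‖z‖ + e) / 2 with hr
      have h1r : 1 ≤ r := by rw [hr]; linarith
      have hzr : ‖z‖ < r := by rw [hr]; linarith
      have hre : r ≤ e := by rw [hr]; linarith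
      have H := hsum z r hzr h1r hre
      have hgz : g z = ∑' n : ℕ, z ^ n • a n := if_pos hlt
      rw [hgz, H.tsum_eq]
      exact cauchy_formula_annulus hc hd hre hz1 hzr
    · have hne : ¬ ‖z‖ < e := by
        rw [heq2]
        exact lt_irrefl e
      exact if_neg hne
  have hhcont : ContinuousOn h {z : ℂ | 1 < ‖z‖} := by
    apply ContinuousOn.mono (s := {z : ℂ | ‖z‖ ≠ 1})
    · apply continuousOn_cauchyIntegral zero_lt_one
      apply hc.comp_continuous (continuous_circleMap 0 1)
      intro θ
      constructor
      · rw [norm_circleMap_zero, abs_one]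
      · rw [norm_circleMap_zero, abs_one]; exact h1e.le
    · intro z hz; exact ne_of_gt hz
  refine ⟨g, ?_, ?_, ?_⟩
  · -- continuity
    intro z hz
    rcases lt_or_eq_of_le (show ‖z‖ ≤ e from hz) with hlt | heq2
    · -- interior point
      set r : ℝ := (max (‖z‖) 1 + e) / 2 with hr
      have hmax1 : (1:ℝ) ≤ max (‖z‖) 1 := le_max_right _ _
      have hmaxe : max (‖z‖) 1 < e := max_lt hlt h1e
      have h1r : 1 ≤ r := by rw [hr]; linarith
      have hzr : ‖z‖ < r := by
        rw [hr]; have := le_max_left (‖z‖) 1; linarith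
      have hre : r ≤ e := by rw [hr]; linarith
      have hrpos : (0:ℝ) < r := by linarith
      have hPcont : ContinuousOn (fun z : ℂ => (2 * Real.pi * Complex.I : ℂ)⁻¹ •
          ∮ w in C(0, r), (w - z)⁻¹ • f w) {w : ℂ | ‖w‖ ≠ r} := by
        apply continuousOn_cauchyIntegral hrpos
        apply hc.comp_continuous (continuous_circleMap 0 r)
        intro θ
        constructor
        · rw [norm_circleMap_zero, abs_of_pos hrpos]; exact h1r
        · rw [norm_circleMap_zero, abs_of_pos hrpos]; exact hre
      have hopen : IsOpen {w : ℂ | ‖w‖ < r} :=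
        IsOpen.preimage continuous_norm isOpen_Iio
      have hPat : ContinuousAt (fun z : ℂ => (2 * Real.pi * Complex.I : ℂ)⁻¹ •
          ∮ w in C(0, r), (w - z)⁻¹ • f w) z := by
        apply ContinuousOn.continuousAt (hPcont.mono (fun w hw => ne_of_lt hw))
        exact hopen.mem_nhds hzr
      have hev : g =ᶠ[nhds z] (fun z : ℂ => (2 * Real.pi * Complex.I : ℂ)⁻¹ •
          ∮ w in C(0, r), (w - z)⁻¹ • f w) := by
        filter_upwards [hopen.mem_nhds hzr] with w hw
        have hwe : ‖w‖ < e := lt_of_lt_of_le hw hre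
        exact ((hgsum w hwe).unique (hsum w r hw h1r hre))
      exact (hPat.congr hev.symm).continuousWithinAt
    · -- boundary point
      have hz1 : 1 < ‖z‖ := by rw [heq2]; exact h1e
      have hOopen : IsOpen {w : ℂ | 1 < ‖w‖} :=
        IsOpen.preimage continuous_norm isOpen_Ioi
      have hmem : {w : ℂ | 1 < ‖w‖} ∈ nhds z := hOopen.mem_nhds hz1
      rw [← continuousWithinAt_inter hmem]
      have hsubA : {w : ℂ | ‖w‖ ≤ e} ∩ {w : ℂ | 1 < ‖w‖} ⊆
          closedAnnulus := fun w hw => ⟨hw.2.le, hw.1⟩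
      have hfh : ContinuousWithinAt (fun w => f w + h w)
          ({w : ℂ | ‖w‖ ≤ e} ∩ {w : ℂ | 1 < ‖w‖}) z := by
        apply ContinuousWithinAt.add
        · exact (hc.mono hsubA) z ⟨hz, hz1⟩
        · exact ((hhcont.mono (fun w hw => hw.2)) z ⟨hz, hz1⟩)
      apply hfh.congr
      · intro w hw
        exact hgeq w hw.2 hw.1
      · exact hgeq z hz1 (le_of_eq heq2)
  · -- HasSum
    intro z hz
    exact hgsum z hz
  · -- bound
    intro z hz
    rcases le_or_gt (‖z‖) r₀ with hle | hgt
    · have hze : ‖z‖ < e := lt_of_le_of_lt hle (by linarith)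
      have H := hgsum z hze
      have hterm : ∀ n : ℕ, ‖z ^ n • a n‖ ≤ M * q ^ n := by
        intro n
        rw [norm_smul, norm_pow]
        calc ‖z‖ ^ n * ‖a n‖ ≤ r₀ ^ n * (M / r₁ ^ n) := by
              apply mul_le_mul (pow_le_pow_left₀ (norm_nonneg z) hle n) (hanorm n)
                (norm_nonneg _) (by positivity)
          _ = M * q ^ n := by
              simp only [hq, div_pow, div_eq_mul_inv, mul_pow]
              ring
      have hgeo : HasSum (fun n : ℕ => M * q ^ n) (M * (1 - q)⁻¹) :=
        (hasSum_geometric_of_lt_one hq0 hq1).mul_left M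
      have hnorm : ‖g z‖ ≤ M * (1 - q)⁻¹ := by
        rw [← H.tsum_eq]
        exact tsum_of_norm_bounded hgeo hterm
      calc ‖g z‖ ≤ M * (1 - q)⁻¹ := hnorm
        _ = (1 - q)⁻¹ * M := mul_comm _ _
        _ ≤ max ((1 - q)⁻¹) (1 + (r₀ - 1)⁻¹) * M :=
            mul_le_mul_of_nonneg_right (le_max_left _ _) hM0
    · have hz1 : 1 < ‖z‖ := lt_trans hr₀1 hgt
      rw [hgeq z hz1 hz]
      have hf : ‖f z‖ ≤ M := hM z ⟨hz1.le, hz⟩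
      have hhb : ‖h z‖ ≤ M / (‖z‖ - 1) := norm_inner_le hM hz1
      have hhb2 : M / (‖z‖ - 1) ≤ M / (r₀ - 1) := by
        apply div_le_div_of_nonneg_left hM0 (by linarith) (by linarith)
      calc ‖f z + h z‖ ≤ ‖f z‖ + ‖h z‖ := norm_add_le _ _
        _ ≤ M + M / (r₀ - 1) := add_le_add hf (le_trans hhb hhb2)
        _ = (1 + (r₀ - 1)⁻¹) * M := by field_simp
        _ ≤ max ((1 - q)⁻¹) (1 + (r₀ - 1)⁻¹) * M :=
            mul_le_mul_of_nonneg_right (le_max_right _ _) hM0
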